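/- Let n ≥ 1, r ≥ 0, and 1 ≤ l ≤ n. In the ring ℂ[a_1,…,a_n][t,t^{-1}] of Laurent polynomials in t over ℂ[a_1,…,a_n], the following identity holds: ∂/∂a_l [ (∏_{i=1}^{n}(1 − t·a_i)) · ∑_{k=0}^{r} h_{r−k}(a_1,…,a_n)·t^{−k} ] = − t · (∏_{i≠l}(1 − t·a_i)) · ∑ (p_l + 1)·a_1^{p_1}⋯a_n^{p_n}, where the last sum ranges over all tuples (p_1,…,p_n) of nonnegative integers with p_1 + ⋯ + p_n = r. -/

import Mathlib

open MvPolynomial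

/-- The complete homogeneous symmetric polynomial of degree `p` in `n` variables. -/
noncomputable def hpoly (n p : ℕ) : MvPolynomial (Fin n) ℂ :=
  ∑ d ∈ Finset.Nat.antidiagonalTuple n p, ∏ i, X i ^ d i

noncomputable def Gpoly (n q : ℕ) (l : Fin n) : MvPolynomial (Fin n) ℂ :=
  ∑ d ∈ Finset.Nat.antidiagonalTuple n q,
    ((d l + 1 : ℕ) : MvPolynomial (Fin n) ℂ) * ∏ i, X i ^ d i

lemma prodXpow {n : ℕ} (d : Fin n → ℕ) :
    (∏ i, X i ^ d i : MvPolynomial (Fin n) ℂ) =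
      monomial (Finsupp.equivFunOnFinite.symm d) 1 := by
  rw [← prod_X_pow_eq_monomial]
  exact (Finset.prod_subset (Finset.subset_univ _) (fun x _ hx => by
    rw [show d x = 0 from Finsupp.notMem_support_iff.mp hx, pow_zero])).symm

lemma hpoly_zero (n : ℕ) : hpoly n 0 = 1 := by
  simp [hpoly, Finset.Nat.antidiagonalTuple_zero_right]

lemma Gpoly_zero (n : ℕ) (l : Fin n) : Gpoly n 0 l = 1 := by
  simp [Gpoly, Finset.Nat.antidiagonalTuple_zero_right]

lemma Xl_mul_pderiv {n : ℕ} (l : Fin n) (d : Fin n → ℕ) :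
    X l * pderiv l (∏ i, X i ^ d i : MvPolynomial (Fin n) ℂ) =
      ((d l : ℕ) : MvPolynomial (Fin n) ℂ) * ∏ i, X i ^ d i := by
  rw [prodXpow, pderiv_monomial]
  set s := Finsupp.equivFunOnFinite.symm d with hs
  have hsl : s l = d l := rfl
  rcases Nat.eq_zero_or_pos (d l) with h | h
  · simp [hsl, h]
  · rw [X, monomial_mul, one_mul, one_mul, hsl,
      show Finsupp.single l 1 + (s - Finsupp.single l 1) = s by
        ext j
        rcases eq_or_ne j l with rfl | hj
        · simp only [Finsupp.add_apply, Finsupp.tsub_apply, Finsupp.single_eq_same, hsl]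
          omega
        · simp [Finsupp.single_eq_of_ne' (Ne.symm hj), Finsupp.tsub_apply],
      show ((d l : ℕ) : MvPolynomial (Fin n) ℂ) = C ((d l : ℕ) : ℂ) by push_cast; rfl,
      C_mul_monomial, mul_one]

lemma Gpoly_eq (n p : ℕ) (l : Fin n) :
    Gpoly n p l = hpoly n p + X l * pderiv l (hpoly n p) := by
  rw [Gpoly, hpoly, map_sum, Finset.mul_sum, ← Finset.sum_add_distrib]
  refine Finset.sum_congr rfl fun d _ => ?_
  rw [Xl_mul_pderiv]
  push_cast
  ring

lemma pderiv_hpoly_succ (n p : ℕ) (l : Fin n) :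
    pderiv l (hpoly n (p + 1)) = Gpoly n p l := by
  classical
  rw [hpoly, map_sum, Gpoly]
  simp_rw [prodXpow, pderiv_monomial, one_mul,
    Finsupp.coe_equivFunOnFinite_symm]
  rw [← Finset.sum_filter_of_ne (p := fun d => d l ≠ 0)
    (fun d _ hne => by
      by_contra h0
      exact hne (by rw [h0]; simp))]
  refine Finset.sum_nbij' (i := fun d j => d j - (if j = l then 1 else 0))
    (j := fun e j => e j + (if j = l then 1 else 0)) ?_ ?_ ?_ ?_ ?_
  · intro d hd
    rw [Finset.mem_filter, Finset.Nat.mem_antidiagonalTuple] at hd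
    rw [Finset.Nat.mem_antidiagonalTuple]
    obtain ⟨h1, h2⟩ := hd
    rw [← Finset.add_sum_erase _ _ (Finset.mem_univ l)] at h1 ⊢
    rw [Finset.sum_congr rfl (g := fun j => d j) (fun j hj => by
      show d j - (if j = l then 1 else 0) = d j
      rw [if_neg (Finset.mem_erase.mp hj).1, Nat.sub_zero])]
    simp only [if_true, eq_self_iff_true]
    omega
  · intro e he
    rw [Finset.Nat.mem_antidiagonalTuple] at he
    rw [Finset.mem_filter, Finset.Nat.mem_antidiagonalTuple]
    rw [← Finset.add_sum_erase _ _ (Finset.mem_univ l)] at he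
    constructor
    · rw [← Finset.add_sum_erase _ _ (Finset.mem_univ l)]
      rw [Finset.sum_congr rfl (g := fun j => e j) (fun j hj => by
        show e j + (if j = l then 1 else 0) = e j
        rw [if_neg (Finset.mem_erase.mp hj).1, Nat.add_zero])]
      simp only [if_true, eq_self_iff_true]
      omega
    · simp
  · intro d hd
    rw [Finset.mem_filter] at hd
    have h2 : d l ≠ 0 := hd.2
    funext j
    show (d j - (if j = l then 1 else 0)) + (if j = l then 1 else 0) = d j
    rcases eq_or_ne j l with rfl | hj
    · simp only [if_true, eq_self_iff_true]
      omega
    · simp only [if_neg hj]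
      omega
  · intro e _
    funext j
    show (e j + (if j = l then 1 else 0)) - (if j = l then 1 else 0) = e j
    omega
  · intro d hd
    rw [Finset.mem_filter] at hd
    have hdl : 1 ≤ d l := Nat.one_le_iff_ne_zero.mpr hd.2
    have hcoe : ((d l - (if l = l then 1 else 0) : ℕ) + 1 : ℕ) = d l := by
      simp only [if_true, eq_self_iff_true]; omega
    beta_reduce
    rw [hcoe,
      show ((d l : ℕ) : MvPolynomial (Fin n) ℂ) = C ((d l : ℕ) : ℂ) from by push_cast; rfl,
      C_mul_monomial, mul_one]
    have hs : (Finsupp.equivFunOnFinite.symm d - Finsupp.single l 1 : Fin n →₀ ℕ) =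
        Finsupp.equivFunOnFinite.symm (fun j => d j - if j = l then 1 else 0) := by
      ext j
      rw [Finsupp.tsub_apply]
      show d j - (Finsupp.single l 1) j = d j - (if j = l then 1 else 0)
      rw [Finsupp.single_apply]
      simp only [eq_comm]
    rw [hs]

lemma laurent_shift (n r : ℕ) (g : ℕ → MvPolynomial (Fin n) ℂ) :
    ∑ k ∈ Finset.range (r+2),
        LaurentPolynomial.C (g (r+1-k)) * LaurentPolynomial.T (-(k:ℤ))
    = (∑ k ∈ Finset.range (r+1),
        LaurentPolynomial.C (g (r-k)) * LaurentPolynomial.T (-(k:ℤ))) *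
          LaurentPolynomial.T (-1)
      + LaurentPolynomial.C (g (r+1)) := by
  rw [Finset.sum_range_succ'
    (fun k => LaurentPolynomial.C (g (r+1-k)) * LaurentPolynomial.T (-(k:ℤ))) (r+1),
    Finset.sum_mul]
  refine congrArg₂ (· + ·) ?_ ?_
  · refine Finset.sum_congr rfl fun i _ => ?_
    rw [LaurentPolynomial.mul_T_assoc]
    congr 2
    · congr 1
      omega
    · push_cast
      ring
  · simp

lemma key_identity (n : ℕ) (l : Fin n) (r : ℕ) :
    (1 - LaurentPolynomial.T 1 * LaurentPolynomial.C (X l)) *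
      (∑ k ∈ Finset.range (r+1),
        LaurentPolynomial.C (pderiv l (hpoly n (r-k))) * LaurentPolynomial.T (-(k:ℤ)))
    = LaurentPolynomial.T 1 * (∑ k ∈ Finset.range (r+1),
        LaurentPolynomial.C (hpoly n (r-k)) * LaurentPolynomial.T (-(k:ℤ)))
      - LaurentPolynomial.T 1 * LaurentPolynomial.C (Gpoly n r l) := by
  induction r with
  | zero =>
    simp [hpoly_zero, Gpoly_zero]
  | succ r ih =>
    rw [show r + 1 + 1 = r + 2 from rfl,
      laurent_shift n r (fun q => pderiv l (hpoly n q)),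
      laurent_shift n r (fun q => hpoly n q)]
    beta_reduce
    rw [pderiv_hpoly_succ n r l,
      show LaurentPolynomial.C (Gpoly n (r+1) l) = LaurentPolynomial.C (hpoly n (r+1)) +
          LaurentPolynomial.C (X l) * LaurentPolynomial.C (Gpoly n r l) from by
        rw [Gpoly_eq n (r+1) l, pderiv_hpoly_succ, map_add, map_mul]]
    have huv : LaurentPolynomial.T (1:ℤ) * LaurentPolynomial.T (-1:ℤ) =
        (1 : LaurentPolynomial (MvPolynomial (Fin n) ℂ)) := by
      rw [← LaurentPolynomial.T_add]
      norm_num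
    linear_combination (LaurentPolynomial.T (-1:ℤ)) * ih -
      (LaurentPolynomial.C (Gpoly n r l)) * huv

/-- In the Laurent polynomial ring in `t` over `ℂ[a_1, …, a_n]`, the
coefficientwise partial derivative `∂/∂a_l` (encoded as an additive map `D` acting by
`pderiv l` on coefficients) satisfies
`∂/∂a_l [(∏_i (1 - t a_i)) ∑_{k=0}^r h_{r-k}(a) t^{-k}]
  = -t (∏_{i ≠ l} (1 - t a_i)) ∑_{p_1+⋯+p_n=r} (p_l + 1) a_1^{p_1} ⋯ a_n^{p_n}`. -/
theorem stmt15 (n : ℕ) (hn : 1 ≤ n) (r : ℕ) (l : Fin n)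
    (D : LaurentPolynomial (MvPolynomial (Fin n) ℂ) →
         LaurentPolynomial (MvPolynomial (Fin n) ℂ))
    (hD : ∀ (p : MvPolynomial (Fin n) ℂ) (m : ℤ),
      D (LaurentPolynomial.C p * LaurentPolynomial.T m) =
        LaurentPolynomial.C (pderiv l p) * LaurentPolynomial.T m)
    (hDadd : ∀ x y, D (x + y) = D x + D y) :
    D ((∏ i : Fin n,
          (1 - LaurentPolynomial.T 1 * LaurentPolynomial.C (X i))) *
        ∑ k ∈ Finset.range (r + 1),
          LaurentPolynomial.C (hpoly n (r - k)) * LaurentPolynomial.T (-(k : ℤ))) =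
      -(LaurentPolynomial.T 1) *
        (∏ i ∈ Finset.univ.erase l,
          (1 - LaurentPolynomial.T 1 * LaurentPolynomial.C (X i))) *
        LaurentPolynomial.C
          (∑ d ∈ Finset.Nat.antidiagonalTuple n r,
            ((d l + 1 : ℕ) : MvPolynomial (Fin n) ℂ) * ∏ i, X i ^ d i) := by
  classical
  set R := MvPolynomial (Fin n) ℂ
  set D0 : LaurentPolynomial R → LaurentPolynomial R :=
    fun f => AddMonoidAlgebra.ofCoeff (Finsupp.mapRange (⇑(pderiv l)) (map_zero _) f.coeff) with hD0
  have hD0single : ∀ (p : R) (m : ℤ),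
      D0 (LaurentPolynomial.C p * LaurentPolynomial.T m) =
        LaurentPolynomial.C (pderiv l p) * LaurentPolynomial.T m := by
    intro p m
    rw [← LaurentPolynomial.single_eq_C_mul_T, ← LaurentPolynomial.single_eq_C_mul_T]
    exact congrArg AddMonoidAlgebra.ofCoeff Finsupp.mapRange_single
  have hD0add : ∀ x y, D0 (x + y) = D0 x + D0 y := fun x y =>
    congrArg AddMonoidAlgebra.ofCoeff (Finsupp.mapRange_add (map_add _) x.coeff y.coeff)
  have hDeq : ∀ f, D f = D0 f := by
    intro f
    induction f using AddMonoidAlgebra.induction_linear with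
    | zero =>
      have : D 0 = D (LaurentPolynomial.C 0 * LaurentPolynomial.T 0) := by simp
      rw [this, hD]
      simp [hD0]
    | add f g hf hg => rw [hDadd, hD0add, hf, hg]
    | single m p =>
      rw [show (AddMonoidAlgebra.single m p : LaurentPolynomial R) =
        LaurentPolynomial.C p * LaurentPolynomial.T m from
          LaurentPolynomial.single_eq_C_mul_T p m, hD, hD0single]
  have hD0zero : D0 0 = 0 := by simp [hD0]
  have hD0mul : ∀ f g, D0 (f * g) = D0 f * g + f * D0 g := by
    intro f g
    induction f using AddMonoidAlgebra.induction_linear with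
    | zero => simp [hD0zero]
    | add f f' hf hf' =>
      rw [add_mul, hD0add, hD0add, hf, hf', add_mul]; ring
    | single m p =>
      induction g using AddMonoidAlgebra.induction_linear with
      | zero => simp [hD0zero]
      | add g g' hg hg' =>
        rw [mul_add, hD0add, hD0add, hg, hg', mul_add, mul_add]; ring
      | single m' p' =>
        rw [LaurentPolynomial.single_eq_C_mul_T, LaurentPolynomial.single_eq_C_mul_T,
          show (LaurentPolynomial.C p * LaurentPolynomial.T m) *
              (LaurentPolynomial.C p' * LaurentPolynomial.T m') =
              LaurentPolynomial.C (p * p') * LaurentPolynomial.T (m + m') by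
            rw [map_mul, LaurentPolynomial.T_add]; ring,
          hD0single, hD0single, hD0single, pderiv_mul, map_add, map_mul, map_mul,
          LaurentPolynomial.T_add]
        ring
  have hD0sub : ∀ x y, D0 (x - y) = D0 x - D0 y := fun x y =>
    congrArg AddMonoidAlgebra.ofCoeff (Finsupp.mapRange_sub (map_sub _) x.coeff y.coeff)
  have hD0sum : ∀ (s : Finset ℕ) (f : ℕ → LaurentPolynomial R),
      D0 (∑ k ∈ s, f k) = ∑ k ∈ s, D0 (f k) := by
    intro s f
    induction s using Finset.induction_on with
    | empty => simpa using hD0zero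
    | insert _ _ hnotmem ih =>
      rw [Finset.sum_insert hnotmem, Finset.sum_insert hnotmem, hD0add, ih]
  have hD0one : D0 1 = 0 := by
    have h := hD0single 1 0
    simpa [MvPolynomial.pderiv_one] using h
  set Q : LaurentPolynomial (MvPolynomial (Fin n) ℂ) := ∏ i ∈ Finset.univ.erase l,
      (1 - LaurentPolynomial.T 1 * LaurentPolynomial.C (X i)) with hQdef
  have hfl : D0 (1 - LaurentPolynomial.T 1 * LaurentPolynomial.C (X l)) =
      -(LaurentPolynomial.T 1) := by
    rw [hD0sub, hD0one, LaurentPolynomial.T_mul, hD0single, pderiv_X_self, map_one,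
      one_mul, zero_sub]
  have hQ0 : D0 Q = 0 := by
    refine Finset.prod_induction _ (fun x => D0 x = 0) ?_ hD0one ?_
    · intro a b ha hb
      rw [hD0mul, ha, hb]
      simp
    · intro i hi
      have hil : i ≠ l := (Finset.mem_erase.mp hi).1
      rw [hD0sub, hD0one, LaurentPolynomial.T_mul, hD0single, pderiv_X_of_ne hil,
        map_zero, zero_mul, sub_zero]
  have hP : (∏ i : Fin n, (1 - LaurentPolynomial.T 1 * LaurentPolynomial.C (X i))) =
      (1 - LaurentPolynomial.T 1 * LaurentPolynomial.C (X l)) * Q :=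
    (Finset.mul_prod_erase Finset.univ _ (Finset.mem_univ l)).symm
  rw [hDeq, hP, hD0mul, hD0mul, hfl, hQ0, hD0sum]
  rw [Finset.sum_congr rfl (fun k _ => hD0single (hpoly n (r - k)) (-(k:ℤ)))]
  rw [show (∑ d ∈ Finset.Nat.antidiagonalTuple n r,
      ((d l + 1 : ℕ) : MvPolynomial (Fin n) ℂ) * ∏ i, X i ^ d i) = Gpoly n r l from rfl]
  linear_combination Q * (key_identity n l r)
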